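/- arXiv:1606.02919 — 6 statements merged into one kernel-verified Lean document; each statement's English description precedes it below -/
import Mathlib

section
/- Let λ ∈ (0,1], let C ⊆ ℝⁿ be a C-set, and let X ⊆ ℝⁿ and U ⊆ ℝᵐ be C-sets. Then Q_k^λ(C) is a C-set for every k ∈ ℕ. -/
open Set Metric Pointwise

noncomputable section

abbrev Euc (n : ℕ) := EuclideanSpace ℝ (Fin n)

def IsCSet {n : ℕ} (C : Set (Euc n)) : Prop :=
  Convex ℝ C ∧ IsCompact C ∧ (0 : Euc n) ∈ interior C

def rho {n : ℕ} (ξ : Euc n) (C : Set (Euc n)) : ℝ :=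
  sSup {μ : ℝ | 0 < μ ∧ μ • ξ ∈ C}

def cdist {n : ℕ} (C D : Set (Euc n)) : ℝ :=
  ⨆ ξ : sphere (0 : Euc n) 1, |Real.log (rho ξ C) - Real.log (rho ξ D)|

def Q1 {n m : ℕ} (A : Matrix (Fin n) (Fin n) ℝ) (B : Matrix (Fin n) (Fin m) ℝ)
    (X : Set (Euc n)) (U : Set (Euc m)) (lam : ℝ) (D : Set (Euc n)) : Set (Euc n) :=
  {x ∈ X | ∃ u ∈ U, WithLp.toLp 2 (A.mulVec x + B.mulVec u) ∈ lam • D}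

def Qiter {n m : ℕ} (A : Matrix (Fin n) (Fin n) ℝ) (B : Matrix (Fin n) (Fin m) ℝ)
    (X : Set (Euc n)) (U : Set (Euc m)) (lam : ℝ) (D : Set (Euc n)) : ℕ → Set (Euc n)
  | 0 => D
  | k + 1 => Q1 A B X U lam (Qiter A B X U lam D k)

def IsContractive {n m : ℕ} (A : Matrix (Fin n) (Fin n) ℝ) (B : Matrix (Fin n) (Fin m) ℝ)
    (X : Set (Euc n)) (U : Set (Euc m)) (lam : ℝ) (C : Set (Euc n)) : Prop :=
  C ⊆ X ∧ ∀ x ∈ C, ∃ u ∈ U, WithLp.toLp 2 (A.mulVec x + B.mulVec u) ∈ lam • C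

def Cmax {n m : ℕ} (A : Matrix (Fin n) (Fin n) ℝ) (B : Matrix (Fin n) (Fin m) ℝ)
    (X : Set (Euc n)) (U : Set (Euc m)) (lam : ℝ) : Set (Euc n) :=
  ⋃₀ {C | IsContractive A B X U lam C}

def ctrb {n m : ℕ} (A : Matrix (Fin n) (Fin n) ℝ) (B : Matrix (Fin n) (Fin m) ℝ) :
    Matrix (Fin n) (Fin n × Fin m) ℝ :=
  Matrix.of fun i p => (A ^ (n - 1 - (p.1 : ℕ)) * B) i p.2

def Controllable {n m : ℕ} (A : Matrix (Fin n) (Fin n) ℝ)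
    (B : Matrix (Fin n) (Fin m) ℝ) : Prop :=
  (ctrb A B).rank = n

def enorm {ι : Type*} [Fintype ι] (v : ι → ℝ) : ℝ :=
  ‖(WithLp.equiv 2 (ι → ℝ)).symm v‖

def sigmaMax {n : ℕ} {ι : Type*} [Fintype ι] (Φ : Matrix (Fin n) ι ℝ) : ℝ :=
  ⨆ ξ : sphere (0 : EuclideanSpace ℝ ι) 1, enorm (Φ.mulVec ξ)

def sigmaMin {n : ℕ} {ι : Type*} [Fintype ι] (Φ : Matrix (Fin n) ι ℝ) : ℝ :=
  ⨅ ξ : sphere (0 : Euc n) 1, enorm (Φ.transpose.mulVec ξ)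

def alphaA {n : ℕ} (A : Matrix (Fin n) (Fin n) ℝ) : ℝ :=
  max 1 (⨆ j ∈ Finset.Icc 1 n, sigmaMax (A ^ j))

def rhoHat {n m : ℕ} (A : Matrix (Fin n) (Fin n) ℝ) (B : Matrix (Fin n) (Fin m) ℝ)
    (lam rx ru : ℝ) : ℝ :=
  lam ^ (n - 1) / alphaA A *
    min (rx / (1 + sigmaMax (ctrb A B) / sigmaMin (ctrb A B)))
        (ru * sigmaMin (ctrb A B))

end

section Aux

variable {n m : ℕ}

private def mvLin (A : Matrix (Fin n) (Fin n) ℝ) : Euc n →ₗ[ℝ] Euc n where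
  toFun x := WithLp.toLp 2 (A.mulVec x)
  map_add' x y := by simp [Matrix.mulVec_add]
  map_smul' c x := by simp [Matrix.mulVec_smul]

private def mvLinB (B : Matrix (Fin n) (Fin m) ℝ) : Euc m →ₗ[ℝ] Euc n where
  toFun x := WithLp.toLp 2 (B.mulVec x)
  map_add' x y := by simp [Matrix.mulVec_add]
  map_smul' c x := by simp [Matrix.mulVec_smul]

private lemma Q1_eq (A : Matrix (Fin n) (Fin n) ℝ) (B : Matrix (Fin n) (Fin m) ℝ)
    (X : Set (Euc n)) (U : Set (Euc m)) (lam : ℝ) (D : Set (Euc n)) :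
    Q1 A B X U lam D = X ∩ (mvLin A) ⁻¹' (lam • D - (mvLinB B) '' U) := by
  ext x
  simp only [Q1, Set.mem_setOf_eq, Set.mem_inter_iff, Set.mem_preimage, Set.mem_sub,
    Set.mem_image]
  constructor
  · rintro ⟨hx, u, hu, hd⟩
    exact ⟨hx, _, hd, _, ⟨u, hu, rfl⟩, by show _ - _ = mvLin A x; simp [mvLin, mvLinB]⟩
  · rintro ⟨hx, d, hd, _, ⟨u, hu, rfl⟩, h⟩
    refine ⟨hx, u, hu, ?_⟩
    have h' : mvLin A x = d - mvLinB B u := by rw [← h]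
    show mvLin A x + mvLinB B u ∈ _
    rw [h', sub_add_cancel]
    exact hd

private lemma Q1_CSet {A : Matrix (Fin n) (Fin n) ℝ} {B : Matrix (Fin n) (Fin m) ℝ}
    {X : Set (Euc n)} {U : Set (Euc m)} {lam : ℝ} {D : Set (Euc n)}
    (hlam : 0 < lam) (hX : IsCSet X) (hU : IsCSet U) (hD : IsCSet D) :
    IsCSet (Q1 A B X U lam D) := by
  obtain ⟨hXc, hXk, hX0⟩ := hX
  obtain ⟨hUc, hUk, hU0⟩ := hU
  obtain ⟨hDc, hDk, hD0⟩ := hD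
  have hcont : Continuous (mvLin A) := (mvLin A).continuous_of_finiteDimensional
  have hcontB : Continuous (mvLinB B) := (mvLinB B).continuous_of_finiteDimensional
  set T : Set (Euc n) := lam • D - (mvLinB B) '' U with hT
  have hTc : Convex ℝ T := (hDc.smul lam).sub (hUc.linear_image (mvLinB B))
  have hTk : IsCompact T := by
    have h1 : IsCompact (lam • D) := hDk.smul lam
    have h2 : IsCompact ((mvLinB B) '' U) := hUk.image hcontB
    rw [hT, sub_eq_add_neg]
    exact h1.add h2.neg
  have hsub : lam • D ⊆ T := by
    intro d hd
    refine ⟨d, hd, 0, ⟨0, interior_subset hU0, by simp⟩, by simp⟩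
  rw [Q1_eq]
  refine ⟨hXc.inter (hTc.linear_preimage (mvLin A)), hXk.inter_right (hTk.isClosed.preimage hcont), ?_⟩
  rw [interior_inter]
  refine ⟨hX0, ?_⟩
  have hopen : IsOpen ((mvLin A) ⁻¹' interior (lam • D)) := isOpen_interior.preimage hcont
  have h0 : (0 : Euc n) ∈ (mvLin A) ⁻¹' interior (lam • D) := by
    simp only [Set.mem_preimage, map_zero]
    rw [interior_smul₀ (ne_of_gt hlam)]
    exact ⟨0, hD0, by simp⟩
  exact interior_maximal (Set.preimage_mono (interior_subset.trans hsub)) hopen h0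

end Aux

theorem stmt3 {n m : ℕ} (lam : ℝ) (hlam : lam ∈ Set.Ioc (0 : ℝ) 1)
    (A : Matrix (Fin n) (Fin n) ℝ) (B : Matrix (Fin n) (Fin m) ℝ)
    (X : Set (Euc n)) (U : Set (Euc m)) (C : Set (Euc n))
    (hX : IsCSet X) (hU : IsCSet U) (hC : IsCSet C) :
    ∀ k : ℕ, IsCSet (Qiter A B X U lam C k) := by
  intro k
  induction k with
  | zero => exact hC
  | succ k ih => exact Q1_CSet hlam.1 hX hU ih
end

section
/- Let λ ∈ (0,1], k ∈ ℕ, let C ⊆ ℝⁿ be a C-set, and let X ⊆ ℝⁿ and U ⊆ ℝᵐ be C-sets. Then x ∈ Q_{k+1}^λ(C) if and only if there exist u₀, …, u_k ∈ U and γ ∈ C such that A^j x + Σ_{i=0}^{j−1} A^{j−1−i} B λ^i u_i ∈ λ^j·X for every j ∈ {0, 1, …, k}, and A^{k+1} x + Σ_{i=0}^{k} A^{k−i} B λ^i u_i = λ^{k+1} γ. -/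
open Set Metric Pointwise

lemma stmt5_key {n m : ℕ} (A : Matrix (Fin n) (Fin n) ℝ) (B : Matrix (Fin n) (Fin m) ℝ)
    (lam : ℝ) (u : ℕ → Euc m) (x y : Euc n)
    (hy : lam • y = A.mulVec x + B.mulVec (u 0)) (j : ℕ) :
    (A ^ (j + 1)).mulVec x +
        ∑ i ∈ Finset.range (j + 1), lam ^ i • (A ^ (j - i) * B).mulVec (u i)
      = lam • ((A ^ j).mulVec y +
        ∑ i ∈ Finset.range j, lam ^ i • (A ^ (j - 1 - i) * B).mulVec (u (i + 1))) := by
  have h1 : (A ^ (j+1)).mulVec x + (A ^ j * B).mulVec (u 0) = lam • (A ^ j).mulVec y := by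
    rw [pow_succ, ← Matrix.mulVec_mulVec, ← Matrix.mulVec_mulVec, ← Matrix.mulVec_add, ← hy,
      Matrix.mulVec_smul]
  have h2 : ∀ i ∈ Finset.range j, lam ^ (i+1) • (A ^ (j - (i+1)) * B).mulVec (u (i+1))
      = lam • (lam ^ i • (A ^ (j - 1 - i) * B).mulVec (u (i+1))) := by
    intro i _
    rw [smul_smul, ← pow_succ', Nat.sub_sub, add_comm 1 i]
  rw [Finset.sum_range_succ', Finset.sum_congr rfl h2, ← Finset.smul_sum]
  simp only [pow_zero, one_smul, Nat.sub_zero]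
  rw [smul_add, ← h1]
  abel

lemma stmt5_smul_step {n : ℕ} {X : Set (Euc n)} {lam t : ℝ} {z : Euc n}
    (hz : z ∈ t • X) : lam • z ∈ (lam * t) • X := by
  obtain ⟨w, hw, rfl⟩ := hz
  rw [smul_smul]
  exact Set.smul_mem_smul_set hw


theorem stmt5 {n m : ℕ} (lam : ℝ) (hlam : lam ∈ Set.Ioc (0 : ℝ) 1) (k : ℕ)
    (A : Matrix (Fin n) (Fin n) ℝ) (B : Matrix (Fin n) (Fin m) ℝ)
    (X : Set (Euc n)) (U : Set (Euc m)) (C : Set (Euc n))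
    (hC : IsCSet C) (hX : IsCSet X) (hU : IsCSet U) (x : Euc n) :
    x ∈ Qiter A B X U lam C (k + 1) ↔
      ∃ u : ℕ → Euc m, (∀ i ≤ k, u i ∈ U) ∧ ∃ γ ∈ C,
        (∀ j ≤ k, WithLp.toLp 2 ((A ^ j).mulVec x +
            ∑ i ∈ Finset.range j, lam ^ i • (A ^ (j - 1 - i) * B).mulVec (u i))
              ∈ lam ^ j • X) ∧
        (A ^ (k + 1)).mulVec x +
            ∑ i ∈ Finset.range (k + 1), lam ^ i • (A ^ (k - i) * B).mulVec (u i)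
          = lam ^ (k + 1) • γ := by
  obtain ⟨hl0, hl1⟩ := hlam
  have hlne : lam ≠ 0 := ne_of_gt hl0
  induction k generalizing x with
  | zero =>
    constructor
    · rintro ⟨hxX, u0, hu0, hmem⟩
      obtain ⟨γ, hγ, hγeq⟩ := hmem
      refine ⟨fun _ => u0, fun i _ => hu0, γ, hγ, ?_, ?_⟩
      · intro j hj
        interval_cases j
        simpa [Matrix.one_mulVec] using hxX
      · simpa [Matrix.one_mulVec] using (congrArg WithLp.ofLp hγeq).symm
    · rintro ⟨u, huU, γ, hγC, hX', hterm⟩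
      have hx0 := hX' 0 le_rfl
      simp only [pow_zero, Matrix.one_mulVec, Finset.sum_range_zero, add_zero, one_smul] at hx0
      simp only [pow_one, Finset.sum_range_one, pow_zero, one_smul, Nat.zero_sub,
        Matrix.one_mul] at hterm
      refine ⟨hx0, u 0, huU 0 le_rfl, Set.mem_smul_set.mpr ⟨γ, hγC, ?_⟩⟩
      show lam • γ = _
      simpa using (congrArg (WithLp.toLp 2) hterm).symm
  | succ k ih =>
    constructor
    · rintro ⟨hxX, u0, hu0U, hmem⟩
      obtain ⟨y, hy, hyeq0⟩ := hmem
      have hyeq : lam • y.ofLp = A.mulVec x + B.mulVec u0 := by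
        simpa using congrArg WithLp.ofLp hyeq0
      obtain ⟨v, hvU, γ, hγC, hXv, htermv⟩ := (ih y).mp hy
      refine ⟨fun i => Nat.casesOn i u0 v, ?_, γ, hγC, ?_, ?_⟩
      · rintro (_|i) hi
        · exact hu0U
        · exact hvU i (by omega)
      · intro j hj
        match j with
        | 0 => simpa [Matrix.one_mulVec] using hxX
        | j+1 =>
          have hkey := stmt5_key A B lam (fun i => Nat.casesOn i u0 v) x y hyeq j
          simp only [Nat.add_sub_cancel]
          rw [hkey, pow_succ' lam j, WithLp.toLp_smul]
          exact stmt5_smul_step (hXv j (by omega))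
      · have hkey := stmt5_key A B lam (fun i => Nat.casesOn i u0 v) x y hyeq (k+1)
        simp only [Nat.add_sub_cancel] at hkey
        rw [hkey, htermv, smul_smul, ← pow_succ']
    · rintro ⟨u, huU, γ, hγC, hXu, hterm⟩
      have hx0 := hXu 0 (by omega)
      simp only [pow_zero, Matrix.one_mulVec, Finset.sum_range_zero, add_zero, one_smul] at hx0
      have hyeq : lam • (lam⁻¹ • (A.mulVec x + B.mulVec (u 0)))
          = A.mulVec x + B.mulVec (u 0) := smul_inv_smul₀ hlne _
      set y : Euc n := WithLp.toLp 2 (lam⁻¹ • (A.mulVec x + B.mulVec (u 0))) with hydef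
      have hy : y ∈ Qiter A B X U lam C (k + 1) := by
        apply (ih y).mpr
        refine ⟨fun i => u (i+1), fun i hi => huU (i+1) (by omega), γ, hγC, ?_, ?_⟩
        · intro j hj
          have hkey := stmt5_key A B lam u x y hyeq j
          have hXj := hXu (j+1) (by omega)
          simp only [Nat.add_sub_cancel] at hXj
          rw [hkey, pow_succ' lam j, mul_smul, WithLp.toLp_smul] at hXj
          exact (smul_mem_smul_set_iff₀ hlne _ _).mp hXj
        · have hkey := stmt5_key A B lam u x y hyeq (k+1)
          simp only [Nat.add_sub_cancel] at hkey
          rw [hkey, pow_succ' lam (k+1), mul_smul] at hterm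
          exact smul_right_injective _ hlne hterm
      exact ⟨hx0, u 0, huU 0 (by omega), Set.mem_smul_set.mpr ⟨y, hy, by
        show lam • y = _
        rw [hydef, ← WithLp.toLp_smul, hyeq]⟩⟩
end

section
/- Let λ ∈ (0,1], let (A,B) be controllable, and let X ⊆ ℝⁿ and U ⊆ ℝᵐ be C-sets. Then there exists η ∈ [0,1) (depending only on A, B, X, U, and λ) such that d(Q_n^λ(C), Q_n^λ(D)) ≤ η·d(C,D) for all C-sets C, D ⊆ ℝⁿ with C ⊆ D, where n is the state-space dimension. -/
open Set Metric Pointwise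

noncomputable section AuxCX

/-- coordinate bound in Euclidean space -/
lemma euc_coord_le {k : ℕ} (w : Euc k) (i : Fin k) : |w i| ≤ ‖w‖ := by
  rw [EuclideanSpace.norm_eq]
  have h1 : |w i| = Real.sqrt (‖w i‖^2) := by
    rw [Real.sqrt_sq_eq_abs]; simp [Real.norm_eq_abs]
  rw [h1]
  apply Real.sqrt_le_sqrt
  exact Finset.single_le_sum (f := fun j => ‖w j‖^2) (fun j _ => by positivity) (Finset.mem_univ i)

lemma euc_block_le {a b : ℕ} (w : EuclideanSpace ℝ (Fin a × Fin b)) (j : Fin a) :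
    ‖(WithLp.toLp 2 (fun i => w (j, i)) : Euc b)‖ ≤ ‖w‖ := by
  rw [EuclideanSpace.norm_eq, EuclideanSpace.norm_eq]
  apply Real.sqrt_le_sqrt
  have h : ∑ p : Fin a × Fin b, ‖w p‖^2 = ∑ j' : Fin a, ∑ i : Fin b, ‖w (j', i)‖^2 :=
    Fintype.sum_prod_type _
  rw [h]
  exact Finset.single_le_sum (f := fun j' => ∑ i : Fin b, ‖w (j', i)‖^2)
    (fun j' _ => by positivity) (Finset.mem_univ j)

lemma lin_bound {E F : Type*} [NormedAddCommGroup E] [NormedSpace ℝ E]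
    [NormedAddCommGroup F] [NormedSpace ℝ F] [FiniteDimensional ℝ E]
    (f : E →ₗ[ℝ] F) : ∃ c, 0 ≤ c ∧ ∀ x, ‖f x‖ ≤ c * ‖x‖ :=
  ⟨‖LinearMap.toContinuousLinearMap f‖, norm_nonneg _,
    fun x => (LinearMap.toContinuousLinearMap f).le_opNorm x⟩

def toEuc {a b : ℕ} (f : (Fin a → ℝ) →ₗ[ℝ] (Fin b → ℝ)) : Euc a →ₗ[ℝ] Euc b :=
  (WithLp.linearEquiv 2 ℝ (Fin b → ℝ)).symm.toLinearMap ∘ₗ f ∘ₗ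
    (WithLp.linearEquiv 2 ℝ (Fin a → ℝ)).toLinearMap

lemma toEuc_apply {a b : ℕ} (f : (Fin a → ℝ) →ₗ[ℝ] (Fin b → ℝ)) (x : Euc a) :
    toEuc f x = f x := rfl

/-! ### rho lemmas -/

lemma rho_nonneg {n : ℕ} (ξ : Euc n) (K : Set (Euc n)) : 0 ≤ rho ξ K :=
  Real.sSup_nonneg (fun _ hμ => le_of_lt hμ.1)

lemma bddAbove_rhoSet {n : ℕ} {K : Set (Euc n)} {R : ℝ} (hK : K ⊆ closedBall 0 R)
    {ξ : Euc n} (hξ : ‖ξ‖ = 1) : BddAbove {μ : ℝ | 0 < μ ∧ μ • ξ ∈ K} := by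
  refine ⟨R, fun μ hμ => ?_⟩
  have h := hK hμ.2
  rw [mem_closedBall, dist_zero_right] at h
  calc μ = ‖μ • ξ‖ := by rw [norm_smul, hξ, Real.norm_eq_abs, abs_of_pos hμ.1, mul_one]
  _ ≤ R := h

lemma le_rho {n : ℕ} {K : Set (Euc n)} {R : ℝ} (hK : K ⊆ closedBall 0 R) {ξ : Euc n}
    (hξ : ‖ξ‖ = 1) {ν : ℝ} (hν : 0 < ν) (hmem : ν • ξ ∈ K) : ν ≤ rho ξ K :=
  le_csSup (bddAbove_rhoSet hK hξ) ⟨hν, hmem⟩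

lemma rho_le {n : ℕ} {K : Set (Euc n)} {R : ℝ} (hK : K ⊆ closedBall 0 R) (hR : 0 ≤ R)
    {ξ : Euc n} (hξ : ‖ξ‖ = 1) : rho ξ K ≤ R := by
  refine Real.sSup_le (fun μ hμ => ?_) hR
  have h := hK hμ.2
  rw [mem_closedBall, dist_zero_right] at h
  calc μ = ‖μ • ξ‖ := by rw [norm_smul, hξ, Real.norm_eq_abs, abs_of_pos hμ.1, mul_one]
  _ ≤ R := h

lemma rho_mono {n : ℕ} {K K' : Set (Euc n)} {R : ℝ} (hK' : K' ⊆ closedBall 0 R)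
    (hsub : K ⊆ K') {ξ : Euc n} (hξ : ‖ξ‖ = 1) : rho ξ K ≤ rho ξ K' :=
  Real.sSup_le (fun μ hμ => le_rho hK' hξ hμ.1 (hsub hμ.2)) (rho_nonneg ξ K')

lemma rho_ge_ball {n : ℕ} {K : Set (Euc n)} {r R : ℝ} (hr : 0 < r)
    (hball : closedBall 0 r ⊆ K) (hK : K ⊆ closedBall 0 R) {ξ : Euc n} (hξ : ‖ξ‖ = 1) :
    r ≤ rho ξ K := by
  refine le_rho hK hξ hr (hball ?_)
  rw [mem_closedBall, dist_zero_right, norm_smul, hξ, Real.norm_eq_abs, abs_of_pos hr, mul_one]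

lemma mem_of_le_rho {n : ℕ} {K : Set (Euc n)} (hconv : Convex ℝ K) (hcomp : IsCompact K)
    (h0 : (0 : Euc n) ∈ K) {ξ : Euc n} (hξ : ‖ξ‖ = 1) {ν : ℝ} (hν : 0 < ν)
    (hle : ν ≤ rho ξ K) : ν • ξ ∈ K := by
  obtain ⟨R, hR⟩ := hcomp.isBounded.subset_closedBall 0
  set S := {μ : ℝ | 0 < μ ∧ μ • ξ ∈ K} with hS
  have hSne : S.Nonempty := by
    by_contra h
    rw [Set.not_nonempty_iff_eq_empty] at h
    have : rho ξ K = 0 := by rw [rho, ← hS, h, Real.sSup_empty]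
    linarith
  have hbdd : BddAbove S := bddAbove_rhoSet hR hξ
  have hKcl : IsClosed K := hcomp.isClosed
  rw [← hKcl.closure_eq]
  rw [Metric.mem_closure_iff]
  intro ε hε
  obtain ⟨μ, hμS, hμgt⟩ := exists_lt_of_lt_csSup hSne (show ν - min (ε/2) (ν/2) < sSup S by
    have : 0 < min (ε/2) (ν/2) := by positivity
    have : ν ≤ sSup S := hle
    linarith)
  rcases le_or_gt ν μ with h | h
  · -- ν ≤ μ: convexity gives ν • ξ ∈ K
    refine ⟨ν • ξ, ?_, by simpa using hε⟩
    have : ν • ξ = (ν / μ) • (μ • ξ) := by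
      rw [smul_smul, div_mul_cancel₀]; exact ne_of_gt hμS.1
    rw [this]
    exact hconv.smul_mem_of_zero_mem h0 hμS.2
      ⟨div_nonneg hν.le hμS.1.le, by rw [div_le_one hμS.1]; exact h⟩
  · refine ⟨μ • ξ, hμS.2, ?_⟩
    rw [dist_eq_norm, ← sub_smul, norm_smul, hξ, mul_one, Real.norm_eq_abs,
      abs_of_pos (by linarith)]
    have h2 : min (ε/2) (ν/2) ≤ ε/2 := min_le_left _ _
    linarith


lemma subset_smul_of_rho {n : ℕ} {C D : Set (Euc n)} (hconv : Convex ℝ C)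
    (hcomp : IsCompact C) (h0 : (0 : Euc n) ∈ C) {α : ℝ} (hα : 1 ≤ α)
    (h : ∀ ξ : Euc n, ‖ξ‖ = 1 → ∀ μ : ℝ, 0 < μ → μ • ξ ∈ D → μ ≤ α * rho ξ C) :
    D ⊆ α • C := by
  intro x hx
  rcases eq_or_ne x 0 with rfl | hx0
  · exact ⟨0, h0, smul_zero α⟩
  have hnx : 0 < ‖x‖ := norm_pos_iff.2 hx0
  set ξ : Euc n := ‖x‖⁻¹ • x with hξdef
  have hξ : ‖ξ‖ = 1 := by
    rw [hξdef, norm_smul, Real.norm_eq_abs, abs_of_pos (by positivity), inv_mul_cancel₀ hnx.ne']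
  have hxξ : ‖x‖ • ξ = x := by rw [hξdef, smul_smul, mul_inv_cancel₀ hnx.ne', one_smul]
  have hαpos : 0 < α := by linarith
  have hμ := h ξ hξ ‖x‖ hnx (by rw [hxξ]; exact hx)
  have hν : ‖x‖ / α ≤ rho ξ C := by rw [div_le_iff₀ hαpos, mul_comm]; exact hμ
  have hmem : (‖x‖ / α) • ξ ∈ C := mem_of_le_rho hconv hcomp h0 hξ (by positivity) hν
  refine ⟨(‖x‖ / α) • ξ, hmem, ?_⟩
  show α • ((‖x‖ / α) • ξ) = x
  have hc : α * (‖x‖ / α) = ‖x‖ := by field_simp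
  rw [smul_smul, hc, hxξ]

/-! ### Qiter lemmas -/

variable {n m : ℕ} {lam : ℝ} {A : Matrix (Fin n) (Fin n) ℝ} {B : Matrix (Fin n) (Fin m) ℝ}
  {X : Set (Euc n)} {U : Set (Euc m)}

lemma Qiter_mono {C D : Set (Euc n)} (h : C ⊆ D) (k : ℕ) :
    Qiter A B X U lam C k ⊆ Qiter A B X U lam D k := by
  induction k with
  | zero => exact h
  | succ k ih =>
    rintro x ⟨hxX, u, huU, hm⟩
    exact ⟨hxX, u, huU, Set.smul_set_mono ih hm⟩

lemma Qiter_subset_X {C : Set (Euc n)} {k : ℕ} (hk : 0 < k) :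
    Qiter A B X U lam C k ⊆ X := by
  obtain ⟨k', rfl⟩ : ∃ k', k = k' + 1 := ⟨k - 1, by omega⟩
  exact fun x hx => hx.1

lemma Qiter_conc (hXc : Convex ℝ X) (hUc : Convex ℝ U) {s : ℝ} (hs : 0 ≤ s) (hs1 : s ≤ 1)
    (k : ℕ) {C₁ C₂ : Set (Euc n)} {x y : Euc n}
    (hx : x ∈ Qiter A B X U lam C₁ k) (hy : y ∈ Qiter A B X U lam C₂ k) :
    s • x + (1 - s) • y ∈ Qiter A B X U lam (s • C₁ + (1 - s) • C₂) k := by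
  induction k generalizing C₁ C₂ x y with
  | zero => exact Set.add_mem_add (smul_mem_smul_set hx) (smul_mem_smul_set hy)
  | succ k ih =>
    obtain ⟨hxX, u₁, hu₁, hm₁⟩ := hx
    obtain ⟨hyX, u₂, hu₂, hm₂⟩ := hy
    have h1s : (0:ℝ) ≤ 1 - s := by linarith
    have hsum : s + (1 - s) = 1 := by ring
    refine ⟨hXc hxX hyX hs h1s hsum, s • u₁ + (1 - s) • u₂,
      hUc hu₁ hu₂ hs h1s hsum, ?_⟩
    obtain ⟨p₁, hp₁, hp₁e⟩ := hm₁
    obtain ⟨p₂, hp₂, hp₂e⟩ := hm₂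
    refine ⟨s • p₁ + (1 - s) • p₂, ih hp₁ hp₂, ?_⟩
    have hp₁e' : lam • p₁ = WithLp.toLp 2 (A.mulVec x + B.mulVec u₁) := hp₁e
    have hp₂e' : lam • p₂ = WithLp.toLp 2 (A.mulVec y + B.mulVec u₂) := hp₂e
    show lam • (s • p₁ + (1 - s) • p₂)
        = WithLp.toLp 2 (A.mulVec (s • x + (1 - s) • y) + B.mulVec (s • u₁ + (1 - s) • u₂))
    calc lam • (s • p₁ + (1 - s) • p₂)
        = s • (lam • p₁) + (1 - s) • (lam • p₂) := by module
      _ = s • WithLp.toLp 2 (A.mulVec x + B.mulVec u₁)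
          + (1 - s) • WithLp.toLp 2 (A.mulVec y + B.mulVec u₂) := by
          rw [hp₁e', hp₂e']
      _ = _ := by
          rw [← WithLp.toLp_smul, ← WithLp.toLp_smul, ← WithLp.toLp_add]
          congr 1
          simp only [WithLp.ofLp_add, WithLp.ofLp_smul, Matrix.mulVec_add, Matrix.mulVec_smul]
          module

lemma traj_mem (hlam : 0 < lam) (k : ℕ) (C : Set (Euc n)) (s : ℕ → Euc n) (u : ℕ → Euc m)
    (hdyn : ∀ j < k, s (j + 1) = A.mulVec (s j) + B.mulVec (u j))
    (hsX : ∀ j < k, s j ∈ lam ^ j • X) (huU : ∀ j < k, u j ∈ lam ^ j • U)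
    (hend : s k ∈ lam ^ k • C) : s 0 ∈ Qiter A B X U lam C k := by
  induction k generalizing C s u with
  | zero => simpa [Qiter] using hend
  | succ k ih =>
    have h0X : s 0 ∈ X := by simpa using hsX 0 (Nat.succ_pos k)
    have h0U : u 0 ∈ U := by simpa using huU 0 (Nat.succ_pos k)
    refine ⟨h0X, u 0, h0U, ?_⟩
    have key : lam⁻¹ • s 1 ∈ Qiter A B X U lam C k := by
      apply ih C (fun j => lam⁻¹ • s (j + 1)) (fun j => lam⁻¹ • u (j + 1))
      · intro j hj
        have := hdyn (j + 1) (by omega)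
        simp only [WithLp.ofLp_smul, Matrix.mulVec_smul, this, smul_add]
      · intro j hj
        have h1 := hsX (j + 1) (by omega)
        have : lam⁻¹ • (lam ^ (j+1) • X) = lam ^ j • X := by
          rw [smul_smul, pow_succ', inv_mul_cancel_left₀ (ne_of_gt hlam)]
        rw [← this]
        exact Set.smul_mem_smul_set h1
      · intro j hj
        have h1 := huU (j + 1) (by omega)
        have : lam⁻¹ • (lam ^ (j+1) • U) = lam ^ j • U := by
          rw [smul_smul, pow_succ', inv_mul_cancel_left₀ (ne_of_gt hlam)]
        rw [← this]
        exact Set.smul_mem_smul_set h1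
      · have : lam⁻¹ • (lam ^ (k+1) • C) = lam ^ k • C := by
          rw [smul_smul, pow_succ', inv_mul_cancel_left₀ (ne_of_gt hlam)]
        rw [← this]
        exact Set.smul_mem_smul_set hend
    have : s 1 = lam • (lam⁻¹ • s 1) := (smul_inv_smul₀ (ne_of_gt hlam) _).symm
    rw [← hdyn 0 (Nat.succ_pos k)] at *
    rw [WithLp.toLp_ofLp]
    rw [this]
    exact Set.smul_mem_smul_set key


set_option maxHeartbeats 1000000 in
lemma deadbeat (hlam : lam ∈ Set.Ioc (0:ℝ) 1) (hAB : Controllable A B) (hn : 0 < n)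
    {εx εu : ℝ} (hεx : 0 < εx) (hεu : 0 < εu)
    (hXb : closedBall 0 εx ⊆ X) (hUb : closedBall 0 εu ⊆ U) :
    ∃ rhat : ℝ, 0 < rhat ∧ ∀ (C : Set (Euc n)), (0 : Euc n) ∈ C →
      ∀ x : Euc n, ‖x‖ ≤ rhat → x ∈ Qiter A B X U lam C n := by
  obtain ⟨hl0, hl1⟩ := hlam
  have hfr : Module.finrank ℝ (LinearMap.range (ctrb A B).mulVecLin)
      = Module.finrank ℝ (Fin n → ℝ) := by
    rw [Module.finrank_fin_fun]; exact hAB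
  have hrange : LinearMap.range (ctrb A B).mulVecLin = ⊤ := Submodule.eq_top_of_finrank_eq hfr
  obtain ⟨g, hg⟩ := LinearMap.exists_rightInverse_of_surjective _ hrange
  set gE : Euc n →ₗ[ℝ] EuclideanSpace ℝ (Fin n × Fin m) :=
    ((WithLp.linearEquiv 2 ℝ (Fin n × Fin m → ℝ)).symm.toLinearMap ∘ₗ g) ∘ₗ
      (WithLp.linearEquiv 2 ℝ (Fin n → ℝ)).toLinearMap with hgEdef
  obtain ⟨cg, hcg0, hcg⟩ := lin_bound gE
  obtain ⟨aN, haN0, haN⟩ := lin_bound (toEuc (A ^ n).mulVecLin)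
  obtain ⟨a, ha0, ha⟩ := lin_bound (toEuc A.mulVecLin)
  obtain ⟨b, hb0, hb⟩ := lin_bound (toEuc B.mulVecLin)
  set cu := cg * aN with hcu
  have hcu0 : 0 ≤ cu := mul_nonneg hcg0 haN0
  set κ := a + b * cu + 1 with hκ
  have hκ1 : (1:ℝ) ≤ κ := by nlinarith
  have hκ0 : (0:ℝ) < κ := by linarith
  set K₀ := κ ^ n + cu + 1 with hK₀def
  have hκn0 : (0:ℝ) < κ ^ n := pow_pos hκ0 n
  have hK₀ : 0 < K₀ := by positivity
  set rhat := lam ^ n * min εx εu / K₀ with hrhatdef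
  have hminpos : 0 < min εx εu := lt_min hεx hεu
  have hlnpos : 0 < lam ^ n := pow_pos hl0 n
  have hrhat : 0 < rhat := by positivity
  refine ⟨rhat, hrhat, ?_⟩
  intro C h0C x hx
  set v : EuclideanSpace ℝ (Fin n × Fin m) := gE (-(toEuc (A ^ n).mulVecLin x)) with hvdef
  set u : ℕ → Euc m :=
    fun k => if h : k < n then (WithLp.toLp 2 (fun i => v (⟨k, h⟩, i)) : Euc m) else 0 with hudef
  have hvb : ‖v‖ ≤ cu * ‖x‖ := by
    calc ‖v‖ ≤ cg * ‖-(toEuc (A ^ n).mulVecLin x)‖ := hcg _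
    _ = cg * ‖toEuc (A ^ n).mulVecLin x‖ := by rw [norm_neg]
    _ ≤ cg * (aN * ‖x‖) := mul_le_mul_of_nonneg_left (haN x) hcg0
    _ = cu * ‖x‖ := by rw [hcu]; ring
  have hub : ∀ k, ‖u k‖ ≤ cu * ‖x‖ := by
    intro k
    by_cases h : k < n
    · have he : u k = (WithLp.toLp 2 (fun i => v (⟨k, h⟩, i)) : Euc m) := by
        simp only [hudef]; rw [dif_pos h]
      rw [he]
      exact (euc_block_le v ⟨k, h⟩).trans hvb
    · have he : u k = 0 := by simp only [hudef]; rw [dif_neg h]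
      rw [he, norm_zero]
      positivity
  set s : ℕ → Euc n := fun j =>
    Nat.rec x (fun j' sj => toEuc A.mulVecLin sj + toEuc B.mulVecLin (u j')) j with hsdef
  have hsdyn : ∀ j, s (j + 1) = toEuc A.mulVecLin (s j) + toEuc B.mulVecLin (u j) :=
    fun j => rfl
  have hsb : ∀ j, ‖s j‖ ≤ κ ^ j * ‖x‖ := by
    intro j
    induction j with
    | zero => simp [hsdef]
    | succ j ih =>
      rw [hsdyn j]
      have h1 : ‖toEuc A.mulVecLin (s j) + toEuc B.mulVecLin (u j)‖
          ≤ a * ‖s j‖ + b * ‖u j‖ := by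
        calc ‖toEuc A.mulVecLin (s j) + toEuc B.mulVecLin (u j)‖
            ≤ ‖toEuc A.mulVecLin (s j)‖ + ‖toEuc B.mulVecLin (u j)‖ := norm_add_le _ _
        _ ≤ a * ‖s j‖ + b * ‖u j‖ := add_le_add (ha _) (hb _)
      have h2 : b * ‖u j‖ ≤ b * (cu * ‖x‖) := mul_le_mul_of_nonneg_left (hub j) hb0
      have h3 : a * ‖s j‖ ≤ a * (κ ^ j * ‖x‖) := mul_le_mul_of_nonneg_left ih ha0
      have h4 : (1:ℝ) ≤ κ ^ j := by
        have := pow_le_pow_right₀ hκ1 (Nat.zero_le j)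
        simpa using this
      have h5 : (0:ℝ) ≤ ‖x‖ := norm_nonneg x
      have hXj : (0:ℝ) ≤ κ ^ j * ‖x‖ := mul_nonneg (pow_nonneg hκ0.le j) h5
      have h6 : b * (cu * ‖x‖) ≤ b * cu * (κ ^ j * ‖x‖) := by
        have h6a := mul_le_mul_of_nonneg_left (le_mul_of_one_le_left h5 h4)
          (mul_nonneg hb0 hcu0)
        calc b * (cu * ‖x‖) = b * cu * ‖x‖ := by ring
        _ ≤ b * cu * (κ ^ j * ‖x‖) := h6a
      have h7 : κ ^ (j + 1) * ‖x‖ = κ * (κ ^ j * ‖x‖) := by rw [pow_succ']; ring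
      have h8 : κ * (κ ^ j * ‖x‖) = a * (κ ^ j * ‖x‖) + b * cu * (κ ^ j * ‖x‖)
          + κ ^ j * ‖x‖ := by rw [hκ]; ring
      calc ‖toEuc A.mulVecLin (s j) + toEuc B.mulVecLin (u j)‖
          ≤ a * (κ ^ j * ‖x‖) + b * (cu * ‖x‖) := by linarith
      _ ≤ κ * (κ ^ j * ‖x‖) := by linarith
      _ = κ ^ (j + 1) * ‖x‖ := h7.symm
  -- trajectory formula
  have hformula : ∀ j, (s j : Fin n → ℝ) = (A ^ j).mulVec x
      + ∑ k ∈ Finset.range j, ((A ^ (j - 1 - k)) * B).mulVec (u k) := by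
    intro j
    induction j with
    | zero => simp [hsdef, Matrix.one_mulVec]
    | succ j ih =>
      have hstep : (s (j+1) : Fin n → ℝ) = A.mulVec (s j) + B.mulVec (u j) := by
        rw [hsdyn j]; rfl
      rw [hstep, ih]
      rw [Matrix.mulVec_add]
      have hsum : A.mulVec (∑ k ∈ Finset.range j, ((A ^ (j - 1 - k)) * B).mulVec (u k))
          = ∑ k ∈ Finset.range j, (A * ((A ^ (j - 1 - k)) * B)).mulVec (u k) := by
        rw [← Matrix.mulVecLin_apply, map_sum]
        simp only [Matrix.mulVecLin_apply, Matrix.mulVec_mulVec]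
      rw [hsum]
      have hcongr : ∑ k ∈ Finset.range j, (A * ((A ^ (j - 1 - k)) * B)).mulVec (u k)
          = ∑ k ∈ Finset.range j, ((A ^ (j + 1 - 1 - k)) * B).mulVec (u k) := by
        refine Finset.sum_congr rfl (fun k hk => ?_)
        have hk' : k < j := Finset.mem_range.mp hk
        have he : j - 1 - k + 1 = j + 1 - 1 - k := by omega
        rw [← Matrix.mul_assoc, ← pow_succ', he]
      rw [hcongr]
      rw [Finset.sum_range_succ]
      have hlast : ((A ^ (j + 1 - 1 - j)) * B).mulVec (u j) = B.mulVec (u j) := by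
        have hz : j + 1 - 1 - j = 0 := by omega
        rw [hz, pow_zero, Matrix.one_mul]
      rw [hlast, Matrix.mulVec_mulVec, ← pow_succ']
      abel
  have hctrb : (ctrb A B).mulVec (v : Fin n × Fin m → ℝ)
      = ∑ k ∈ Finset.range n, ((A ^ (n - 1 - k)) * B).mulVec (u k) := by
    funext i
    rw [Matrix.mulVec, dotProduct]
    rw [Fintype.sum_prod_type]
    have h1 : ∀ j : Fin n, ∑ q : Fin m, ctrb A B i (j, q) * v (j, q)
        = (((A ^ (n - 1 - (j:ℕ))) * B).mulVec (u (j:ℕ))) i := by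
      intro j
      rw [Matrix.mulVec, dotProduct]
      refine Finset.sum_congr rfl (fun q _ => ?_)
      have hub2 : u (↑j) = (WithLp.toLp 2 (fun i => v (⟨(j:ℕ), j.isLt⟩, i)) : Euc m) := by
        simp only [hudef]; rw [dif_pos j.isLt]
      rw [hub2]
      rfl
    rw [Finset.sum_congr rfl (fun j _ => h1 j)]
    have := Fin.sum_univ_eq_sum_range
      (fun k => (((A ^ (n - 1 - k)) * B).mulVec (u k)) i) n
    simpa using this
  have hPhi : (ctrb A B).mulVec (v : Fin n × Fin m → ℝ) = -((A ^ n).mulVec x) := by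
    have h2 := LinearMap.congr_fun hg (-((A ^ n).mulVec x))
    exact h2
  have hsn : s n = 0 := by
    have h3 : (s n : Fin n → ℝ) = 0 := by
      rw [hformula n, ← hctrb, hPhi]
      abel
    simpa using congrArg (WithLp.toLp 2) h3
  have hs0 : s 0 = x := rfl
  clear_value s u v
  rw [← hs0]
  -- memberships
  have hjn : ∀ j, j ≤ n → κ ^ j ≤ κ ^ n := fun j hj => pow_le_pow_right₀ hκ1 hj
  have hlamj : ∀ j, j ≤ n → lam ^ n ≤ lam ^ j :=
    fun j hj => pow_le_pow_of_le_one hl0.le hl1 hj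
  have hbound : ∀ c t, 0 ≤ c → c ≤ K₀ → t ≤ c * ‖x‖ → ∀ j, j ≤ n → ∀ ε, min εx εu ≤ ε →
      t ≤ lam ^ j * ε := by
    intro c t hc hcK ht j hj ε hε
    have h1 : t ≤ c * rhat := le_trans ht (mul_le_mul_of_nonneg_left hx hc)
    have h2 : c * rhat ≤ K₀ * rhat := mul_le_mul_of_nonneg_right hcK hrhat.le
    have h3 : K₀ * rhat = lam ^ n * min εx εu := by
      rw [hrhatdef]; field_simp
    have h4 : lam ^ n * min εx εu ≤ lam ^ j * ε :=
      mul_le_mul (hlamj j hj) hε hminpos.le (pow_nonneg hl0.le j)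
    linarith
  apply traj_mem hl0 n C s u
  · intro j _
    rw [hsdyn j]; rfl
  · intro j hj
    have hb1 : ‖s j‖ ≤ lam ^ j * εx := by
      refine hbound (κ ^ n) ‖s j‖ hκn0.le (by rw [hK₀def]; linarith) ?_ j hj.le εx (min_le_left _ _)
      calc ‖s j‖ ≤ κ ^ j * ‖x‖ := hsb j
      _ ≤ κ ^ n * ‖x‖ := mul_le_mul_of_nonneg_right (hjn j hj.le) (norm_nonneg x)
    have hlj : (0:ℝ) < lam ^ j := pow_pos hl0 j
    refine ⟨(lam ^ j)⁻¹ • s j, hXb ?_, smul_inv_smul₀ hlj.ne' _⟩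
    rw [mem_closedBall, dist_zero_right, norm_smul, Real.norm_eq_abs,
      abs_of_pos (inv_pos.mpr hlj)]
    rw [inv_mul_le_iff₀ hlj]
    linarith [hb1]
  · intro j hj
    have hb1 : ‖u j‖ ≤ lam ^ j * εu := by
      refine hbound cu ‖u j‖ hcu0 (by rw [hK₀def]; linarith) (hub j) j hj.le εu (min_le_right _ _)
    have hlj : (0:ℝ) < lam ^ j := pow_pos hl0 j
    refine ⟨(lam ^ j)⁻¹ • u j, hUb ?_, smul_inv_smul₀ hlj.ne' _⟩
    rw [mem_closedBall, dist_zero_right, norm_smul, Real.norm_eq_abs,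
      abs_of_pos (inv_pos.mpr hlj)]
    rw [inv_mul_le_iff₀ hlj]
    linarith [hb1]
  · rw [hsn]
    exact ⟨0, h0C, smul_zero _⟩


lemma contraction_eta {r M : ℝ} (hr0 : 0 < r) (hr1 : r ≤ 1) (hM : 0 ≤ M) :
    ∃ η : ℝ, 0 ≤ η ∧ η < 1 ∧ ∀ t d : ℝ, 0 ≤ t → d ≤ M →
      d ≤ Real.log ((1 - r) * Real.exp t + r) → d ≤ η * t := by
  set T := M + 1 with hTdef
  have hT : (0:ℝ) < T := by linarith
  have hT1 : (1:ℝ) ≤ T := by linarith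
  have heT : Real.exp (-T) < 1 := by
    rw [← Real.exp_zero]
    exact Real.exp_lt_exp.2 (by linarith)
  have heT0 : 0 < Real.exp (-T) := Real.exp_pos _
  set c₁ := 1 - r * (1 - Real.exp (-T)) / T with hc₁def
  set c₂ := M / T with hc₂def
  have hc₂0 : 0 ≤ c₂ := div_nonneg hM hT.le
  have hc₂1 : c₂ < 1 := by rw [hc₂def, div_lt_one hT]; linarith
  have hc₁1 : c₁ < 1 := by
    rw [hc₁def]
    have : 0 < r * (1 - Real.exp (-T)) / T :=
      div_pos (mul_pos hr0 (by linarith)) hT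
    linarith
  have hc₁0 : 0 ≤ c₁ := by
    rw [hc₁def]
    rw [sub_nonneg, div_le_one hT]
    nlinarith
  refine ⟨max c₁ c₂, le_trans hc₂0 (le_max_right _ _), max_lt hc₁1 hc₂1, ?_⟩
  intro t d ht hdM hdlog
  rcases le_or_gt t T with hcase | hcase
  · -- log bound regime
    set θ := t / T with hθdef
    have hθ0 : 0 ≤ θ := div_nonneg ht hT.le
    have hθ1 : θ ≤ 1 := by rw [hθdef, div_le_one hT]; exact hcase
    have hθT : θ * T = t := div_mul_cancel₀ t hT.ne'
    have hconv := convexOn_exp.2 (Set.mem_univ (-T)) (Set.mem_univ (0:ℝ))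
      hθ0 (show (0:ℝ) ≤ 1 - θ by linarith) (show θ + (1 - θ) = 1 by ring)
    have hexp : Real.exp (-t) ≤ θ * Real.exp (-T) + (1 - θ) := by
      have harg : θ • (-T) + (1 - θ) • (0:ℝ) = -t := by
        simp only [smul_eq_mul]; rw [mul_neg, mul_zero, add_zero, hθT]
      rw [harg] at hconv
      simpa [Real.exp_zero] using hconv
    have hypos : 0 < 1 - r * (1 - Real.exp (-t)) := by
      have h1 : 1 - r * (1 - Real.exp (-t)) = (1 - r) + r * Real.exp (-t) := by ring
      rw [h1]
      have := Real.exp_pos (-t)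
      nlinarith
    have hsplit : (1 - r) * Real.exp t + r = Real.exp t * (1 - r * (1 - Real.exp (-t))) := by
      rw [Real.exp_neg]
      have he0 : Real.exp t ≠ 0 := (Real.exp_pos t).ne'
      field_simp
      ring
    have hlog : Real.log ((1 - r) * Real.exp t + r)
        = t + Real.log (1 - r * (1 - Real.exp (-t))) := by
      rw [hsplit, Real.log_mul (Real.exp_pos t).ne' hypos.ne', Real.log_exp]
    have hlog2 : Real.log (1 - r * (1 - Real.exp (-t))) ≤ -(r * (1 - Real.exp (-t))) := by
      have := Real.log_le_sub_one_of_pos hypos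
      linarith
    have hmono : r * (θ * (1 - Real.exp (-T))) ≤ r * (1 - Real.exp (-t)) := by
      apply mul_le_mul_of_nonneg_left _ hr0.le
      nlinarith
    have hc₁t : Real.log ((1 - r) * Real.exp t + r) ≤ c₁ * t := by
      have hc₁eq : c₁ * t = t - r * (θ * (1 - Real.exp (-T))) := by
        rw [hc₁def, hθdef]
        field_simp
      rw [hlog, hc₁eq]
      linarith
    have hfin : c₁ * t ≤ max c₁ c₂ * t := mul_le_mul_of_nonneg_right (le_max_left _ _) ht
    linarith
  · -- large t regime
    have h1 : M = c₂ * T := by rw [hc₂def]; field_simp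
    have h2 : c₂ * T ≤ c₂ * t := mul_le_mul_of_nonneg_left hcase.le hc₂0
    have h3 : c₂ * t ≤ max c₁ c₂ * t := mul_le_mul_of_nonneg_right (le_max_right _ _) ht
    linarith


lemma cdist_zero_of_dim_zero (C D : Set (Euc 0)) : cdist C D = 0 := by
  have hempty : IsEmpty (sphere (0 : Euc 0) 1) := by
    constructor
    rintro ⟨ξ, hξ⟩
    rw [mem_sphere_zero_iff_norm] at hξ
    have hz : ξ = 0 := Subsingleton.elim _ _
    rw [hz, norm_zero] at hξ
    norm_num at hξ
  rw [cdist, iSup, Set.range_eq_empty, Real.sSup_empty]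

lemma interior_ball (S : Set (Euc n)) (h : (0:Euc n) ∈ interior S) :
    ∃ ε : ℝ, 0 < ε ∧ closedBall 0 ε ⊆ S := by
  rw [mem_interior_iff_mem_nhds, Metric.mem_nhds_iff] at h
  obtain ⟨ε, hε0, hε⟩ := h
  refine ⟨ε / 2, by linarith, fun y hy => hε ?_⟩
  rw [mem_closedBall] at hy
  rw [mem_ball]
  linarith

end AuxCX

set_option maxHeartbeats 1000000 in
theorem stmt6 {n m : ℕ} (lam : ℝ) (hlam : lam ∈ Set.Ioc (0 : ℝ) 1)
    (A : Matrix (Fin n) (Fin n) ℝ) (B : Matrix (Fin n) (Fin m) ℝ)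
    (hAB : Controllable A B)
    (X : Set (Euc n)) (U : Set (Euc m)) (hX : IsCSet X) (hU : IsCSet U) :
    ∃ η ∈ Set.Ico (0 : ℝ) 1, ∀ C D : Set (Euc n), IsCSet C → IsCSet D → C ⊆ D →
      cdist (Qiter A B X U lam C n) (Qiter A B X U lam D n) ≤ η * cdist C D := by
  rcases Nat.eq_zero_or_pos n with hn | hn
  · subst hn
    refine ⟨0, ⟨le_refl 0, one_pos⟩, fun C D _ _ _ => ?_⟩
    rw [cdist_zero_of_dim_zero, cdist_zero_of_dim_zero]
    norm_num
  have hl0 : 0 < lam := hlam.1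
  have hl1 : lam ≤ 1 := hlam.2
  -- outer bound for X
  obtain ⟨RX0, hRX0⟩ := hX.2.1.isBounded.subset_closedBall 0
  set R := max RX0 1 with hRdef
  have hR1 : (1:ℝ) ≤ R := le_max_right _ _
  have hR0 : (0:ℝ) < R := by linarith
  have hXR : X ⊆ closedBall 0 R :=
    hRX0.trans (closedBall_subset_closedBall (le_max_left _ _))
  -- inner balls
  obtain ⟨εx, hεx0, hXb⟩ := interior_ball X hX.2.2
  obtain ⟨εu, hεu0, hUb⟩ := interior_ball U hU.2.2
  obtain ⟨rhat0, hrhat00, hDB0⟩ := deadbeat ⟨hl0, hl1⟩ hAB hn hεx0 hεu0 hXb hUb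
  set rh := min rhat0 R with hrhdef
  have hrh0 : 0 < rh := lt_min hrhat00 hR0
  have hrhR : rh ≤ R := min_le_right _ _
  have hDB : ∀ (C : Set (Euc n)), (0 : Euc n) ∈ C →
      ∀ x : Euc n, ‖x‖ ≤ rh → x ∈ Qiter A B X U lam C n :=
    fun C h0 x hx => hDB0 C h0 x (hx.trans (min_le_left _ _))
  set r := rh / R with hrdef
  have hr0 : 0 < r := div_pos hrh0 hR0
  have hr1 : r ≤ 1 := by rw [hrdef, div_le_one hR0]; exact hrhR
  set M := Real.log R - Real.log rh with hMdef
  have hM0 : 0 ≤ M := by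
    have := Real.log_le_log hrh0 hrhR
    linarith
  obtain ⟨η, hη0, hη1, hηkey⟩ := contraction_eta hr0 hr1 hM0
  refine ⟨η, ⟨hη0, hη1⟩, fun C D hC hD hCD => ?_⟩
  have h0C : (0 : Euc n) ∈ C := interior_subset hC.2.2
  have hfCX : Qiter A B X U lam C n ⊆ X := Qiter_subset_X hn
  have hfDX : Qiter A B X U lam D n ⊆ X := Qiter_subset_X hn
  have hfCR : Qiter A B X U lam C n ⊆ closedBall 0 R := hfCX.trans hXR
  have hfDR : Qiter A B X U lam D n ⊆ closedBall 0 R := hfDX.trans hXR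
  have hfCball : closedBall 0 rh ⊆ Qiter A B X U lam C n := by
    intro w hw
    rw [mem_closedBall, dist_zero_right] at hw
    exact hDB C h0C w hw
  -- bounds for C, D
  obtain ⟨RC0, hRC0⟩ := hC.2.1.isBounded.subset_closedBall 0
  set RC := max RC0 1 with hRCdef
  have hRC1 : (1:ℝ) ≤ RC := le_max_right _ _
  have hCRC : C ⊆ closedBall 0 RC :=
    hRC0.trans (closedBall_subset_closedBall (le_max_left _ _))
  obtain ⟨RD0, hRD0⟩ := hD.2.1.isBounded.subset_closedBall 0
  set RD := max RD0 1 with hRDdef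
  have hRD1 : (1:ℝ) ≤ RD := le_max_right _ _
  have hDRD : D ⊆ closedBall 0 RD :=
    hRD0.trans (closedBall_subset_closedBall (le_max_left _ _))
  obtain ⟨rC, hrC0, hCb⟩ := interior_ball C hC.2.2
  obtain ⟨rD, hrD0, hDb⟩ := interior_ball D hD.2.2
  have hrCRC : rC ≤ RC := by
    have := hCb.trans hCRC
    have h1 : (rC : ℝ) • (EuclideanSpace.single (⟨0, hn⟩ : Fin n) (1:ℝ)) ∈ closedBall (0:Euc n) rC := by
      rw [mem_closedBall, dist_zero_right, norm_smul, EuclideanSpace.norm_single]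
      rw [Real.norm_eq_abs, abs_of_pos hrC0]; norm_num
    have h2 := this h1
    rw [mem_closedBall, dist_zero_right, norm_smul, EuclideanSpace.norm_single, norm_one] at h2
    rw [Real.norm_eq_abs, abs_of_pos hrC0] at h2
    linarith [h2]
  have hrDRD : rD ≤ RD := by
    have := hDb.trans hDRD
    have h1 : (rD : ℝ) • (EuclideanSpace.single (⟨0, hn⟩ : Fin n) (1:ℝ)) ∈ closedBall (0:Euc n) rD := by
      rw [mem_closedBall, dist_zero_right, norm_smul, EuclideanSpace.norm_single]
      rw [Real.norm_eq_abs, abs_of_pos hrD0]; norm_num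
    have h2 := this h1
    rw [mem_closedBall, dist_zero_right, norm_smul, EuclideanSpace.norm_single, norm_one] at h2
    rw [Real.norm_eq_abs, abs_of_pos hrD0] at h2
    linarith [h2]
  -- bddAbove for the cdist C D family
  set t := cdist C D with htdef
  have hbddCD : BddAbove (Set.range fun ξ : sphere (0:Euc n) 1 =>
      |Real.log (rho ξ C) - Real.log (rho ξ D)|) := by
    refine ⟨max |Real.log rC| |Real.log RC| + max |Real.log rD| |Real.log RD|, ?_⟩
    rintro y ⟨ξ, rfl⟩
    have hξ : ‖(ξ : Euc n)‖ = 1 := mem_sphere_zero_iff_norm.mp ξ.2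
    have hC1 : rC ≤ rho ξ C := rho_ge_ball hrC0 hCb hCRC hξ
    have hC2 : rho ξ C ≤ RC := rho_le hCRC (by linarith) hξ
    have hD1 : rD ≤ rho ξ D := rho_ge_ball hrD0 hDb hDRD hξ
    have hD2 : rho ξ D ≤ RD := rho_le hDRD (by linarith) hξ
    have hClog : |Real.log (rho ξ C)| ≤ max |Real.log rC| |Real.log RC| :=
      abs_le_max_abs_abs (Real.log_le_log hrC0 hC1) (Real.log_le_log (by linarith) hC2)
    have hDlog : |Real.log (rho ξ D)| ≤ max |Real.log rD| |Real.log RD| :=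
      abs_le_max_abs_abs (Real.log_le_log hrD0 hD1) (Real.log_le_log (by linarith) hD2)
    calc |Real.log (rho ξ C) - Real.log (rho ξ D)|
        ≤ |Real.log (rho ξ C)| + |Real.log (rho ξ D)| := abs_sub _ _
    _ ≤ _ := add_le_add hClog hDlog
  have hpointwise : ∀ ξ : Euc n, ‖ξ‖ = 1 →
      |Real.log (rho ξ C) - Real.log (rho ξ D)| ≤ t := by
    intro ξ hξ
    have hmem : ξ ∈ sphere (0:Euc n) 1 := mem_sphere_zero_iff_norm.mpr hξ
    exact le_ciSup hbddCD (⟨ξ, hmem⟩ : sphere (0:Euc n) 1)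
  have ht0 : 0 ≤ t := by
    set ξ₀ : Euc n := EuclideanSpace.single (⟨0, hn⟩ : Fin n) (1:ℝ) with hξ₀def
    have hξ₀ : ‖ξ₀‖ = 1 := by rw [hξ₀def, EuclideanSpace.norm_single]; norm_num
    exact le_trans (abs_nonneg _) (hpointwise ξ₀ hξ₀)
  set α := Real.exp t with hαdef
  have hα1 : 1 ≤ α := Real.one_le_exp ht0
  have hα0 : 0 < α := by linarith
  -- D ⊆ α • C
  have hDsub : D ⊆ α • C := by
    refine subset_smul_of_rho hC.1 hC.2.1 h0C hα1 (fun ξ hξ μ hμ0 hμmem => ?_)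
    have h1 : μ ≤ rho ξ D := le_rho hDRD hξ hμ0 hμmem
    have h2 := hpointwise ξ hξ
    have h3 : Real.log (rho ξ D) - Real.log (rho ξ C) ≤ t := by
      have := neg_abs_le (Real.log (rho ξ C) - Real.log (rho ξ D))
      linarith
    have hρC0 : 0 < rho ξ C := lt_of_lt_of_le hrC0 (rho_ge_ball hrC0 hCb hCRC hξ)
    have hρD0 : 0 < rho ξ D := lt_of_lt_of_le hrD0 (rho_ge_ball hrD0 hDb hDRD hξ)
    have h4 : rho ξ D ≤ α * rho ξ C := by
      have h5 : Real.log (rho ξ D) ≤ t + Real.log (rho ξ C) := by linarith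
      have h6 := Real.exp_log hρD0
      have h7 := Real.exp_log hρC0
      calc rho ξ D = Real.exp (Real.log (rho ξ D)) := h6.symm
      _ ≤ Real.exp (t + Real.log (rho ξ C)) := Real.exp_le_exp.2 h5
      _ = α * rho ξ C := by rw [Real.exp_add, h7]
    linarith
  have hsub2 : Qiter A B X U lam D n ⊆ Qiter A B X U lam (α • C) n := Qiter_mono hDsub n
  -- per-direction bound
  have hmain : ∀ ξ : sphere (0:Euc n) 1,
      |Real.log (rho ξ (Qiter A B X U lam C n)) - Real.log (rho ξ (Qiter A B X U lam D n))|
        ≤ η * t := by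
    rintro ⟨ξ, hξmem⟩
    have hξ : ‖ξ‖ = 1 := mem_sphere_zero_iff_norm.mp hξmem
    set ρ₁ := rho ξ (Qiter A B X U lam C n) with hρ₁def
    set ρ₂ := rho ξ (Qiter A B X U lam D n) with hρ₂def
    have h₁l : rh ≤ ρ₁ := rho_ge_ball hrh0 hfCball hfCR hξ
    have h₁u : ρ₁ ≤ R := rho_le hfCR hR0.le hξ
    have h12 : ρ₁ ≤ ρ₂ := rho_mono hfDR (Qiter_mono hCD n) hξ
    have h₂u : ρ₂ ≤ R := rho_le hfDR hR0.le hξ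
    have hρ₁0 : 0 < ρ₁ := lt_of_lt_of_le hrh0 h₁l
    have hρ₂0 : 0 < ρ₂ := lt_of_lt_of_le hρ₁0 h12
    -- key inequality
    have hkey : ρ₂ ≤ α * ρ₁ - (α - 1) * rh := by
      refine Real.sSup_le (fun μ hμ => ?_) (by nlinarith)
      obtain ⟨hμ0, hμmem⟩ := hμ
      have hx1 : μ • ξ ∈ Qiter A B X U lam (α • C) n := hsub2 hμmem
      have hw : rh • ξ ∈ Qiter A B X U lam {(0:Euc n)} n := by
        refine hDB {0} rfl (rh • ξ) ?_
        rw [norm_smul, hξ, Real.norm_eq_abs, abs_of_pos hrh0, mul_one]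
      have hs0 : (0:ℝ) ≤ 1/α := by positivity
      have hs1 : 1/α ≤ 1 := by rw [div_le_one hα0]; linarith
      have hcomb := Qiter_conc hX.1 hU.1 hs0 hs1 n hx1 hw
      have hseteq : (1/α) • (α • C) + (1 - 1/α) • ({(0:Euc n)} : Set (Euc n)) = C := by
        rw [smul_smul, one_div, inv_mul_cancel₀ hα0.ne', one_smul]
        rw [Set.smul_set_singleton, smul_zero, Set.add_singleton]
        simp
      rw [hseteq] at hcomb
      have hpt : (1/α) • (μ • ξ) + (1 - 1/α) • (rh • ξ) = ((μ + (α-1)*rh)/α) • ξ := by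
        rw [smul_smul, smul_smul, ← add_smul]
        congr 1
        field_simp
      rw [hpt] at hcomb
      have hcoef : 0 < (μ + (α-1)*rh)/α := by
        apply div_pos _ hα0
        nlinarith
      have hle := le_rho hfCR hξ hcoef hcomb
      rw [div_le_iff₀ hα0] at hle
      nlinarith [hle]
    -- logs
    have habs : |Real.log ρ₁ - Real.log ρ₂| = Real.log ρ₂ - Real.log ρ₁ := by
      rw [abs_sub_comm]
      exact abs_of_nonneg (by linarith [Real.log_le_log hρ₁0 h12])
    rw [habs]
    have hdM : Real.log ρ₂ - Real.log ρ₁ ≤ M := by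
      have ha1 := Real.log_le_log hρ₂0 h₂u
      have ha2 := Real.log_le_log hrh0 h₁l
      rw [hMdef]; linarith
    have hdlog : Real.log ρ₂ - Real.log ρ₁ ≤ Real.log ((1 - r) * α + r) := by
      have hmid0 : 0 < α * ρ₁ - (α - 1) * rh := by nlinarith
      have h1 : Real.log ρ₂ ≤ Real.log (α * ρ₁ - (α - 1) * rh) :=
        Real.log_le_log hρ₂0 hkey
      have hrhrR : rh = r * R := by rw [hrdef]; field_simp
      have h2 : α * ρ₁ - (α - 1) * rh ≤ ρ₁ * ((1 - r) * α + r) := by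
        nlinarith [mul_nonneg (mul_nonneg (sub_nonneg.2 hα1) hr0.le) (sub_nonneg.2 h₁u)]
      have hfac0 : 0 < (1 - r) * α + r := by nlinarith
      have h3 : Real.log (ρ₁ * ((1 - r) * α + r))
          = Real.log ρ₁ + Real.log ((1 - r) * α + r) :=
        Real.log_mul hρ₁0.ne' hfac0.ne'
      have h4 : Real.log (α * ρ₁ - (α - 1) * rh) ≤ Real.log (ρ₁ * ((1 - r) * α + r)) :=
        Real.log_le_log hmid0 h2
      linarith
    exact hηkey t (Real.log ρ₂ - Real.log ρ₁) ht0 hdM hdlog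
  rw [cdist]
  exact Real.iSup_le (fun ξ => hmain ξ) (mul_nonneg hη0 ht0)
end

section
/- Let λ ∈ (0,1], let X ⊆ ℝⁿ and U ⊆ ℝᵐ be C-sets, and let C ⊆ X be a λ-contractive set. Then for every k ∈ ℕ the set Q_k^λ(C) is λ-contractive, and consequently Q_k^λ(C) ⊆ C_max^λ. -/
open Set Metric Pointwise

lemma contractive_Q1 {n m : ℕ} {A : Matrix (Fin n) (Fin n) ℝ} {B : Matrix (Fin n) (Fin m) ℝ}
    {X : Set (Euc n)} {U : Set (Euc m)} {lam : ℝ} {D : Set (Euc n)}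
    (hD : IsContractive A B X U lam D) : IsContractive A B X U lam (Q1 A B X U lam D) := by
  have hsub : D ⊆ Q1 A B X U lam D := fun d hd => ⟨hD.1 hd, hD.2 d hd⟩
  refine ⟨fun x hx => hx.1, fun x hx => ?_⟩
  obtain ⟨hxX, u, hu, hmem⟩ := hx
  exact ⟨u, hu, Set.smul_set_mono hsub hmem⟩

theorem stmt11 {n m : ℕ} (lam : ℝ) (hlam : lam ∈ Set.Ioc (0 : ℝ) 1)
    (A : Matrix (Fin n) (Fin n) ℝ) (B : Matrix (Fin n) (Fin m) ℝ)
    (X : Set (Euc n)) (U : Set (Euc m)) (hX : IsCSet X) (hU : IsCSet U)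
    (C : Set (Euc n)) (hC : IsContractive A B X U lam C) :
    ∀ k : ℕ, IsContractive A B X U lam (Qiter A B X U lam C k) ∧
      Qiter A B X U lam C k ⊆ Cmax A B X U lam := by
  intro k
  have h : IsContractive A B X U lam (Qiter A B X U lam C k) := by
    induction k with
    | zero => exact hC
    | succ k ih => exact contractive_Q1 ih
  exact ⟨h, fun x hx => ⟨_, h, hx⟩⟩
end

section
/- Let λ ∈ (0,1], let D ⊆ ℝⁿ be a C-set, and let X ⊆ ℝⁿ and U ⊆ ℝᵐ be C-sets. Then λ^k·Q_k^1(D) ⊆ Q_k^λ(D) for every k ∈ ℕ. -/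
open Set Metric Pointwise

theorem stmt12 {n m : ℕ} (lam : ℝ) (hlam : lam ∈ Set.Ioc (0 : ℝ) 1)
    (A : Matrix (Fin n) (Fin n) ℝ) (B : Matrix (Fin n) (Fin m) ℝ)
    (X : Set (Euc n)) (U : Set (Euc m)) (hX : IsCSet X) (hU : IsCSet U)
    (D : Set (Euc n)) (hD : IsCSet D) :
    ∀ k : ℕ, lam ^ k • Qiter A B X U 1 D k ⊆ Qiter A B X U lam D k := by
  obtain ⟨hlam0, hlam1⟩ := hlam
  intro k
  induction k with
  | zero => simp [Qiter]
  | succ k ih =>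
      intro y hy
      rw [Set.mem_smul_set] at hy
      obtain ⟨x, hx, rfl⟩ := hy
      obtain ⟨hxX, u, huU, hAxBu⟩ := hx
      have hpow0 : 0 ≤ lam ^ (k + 1) := le_of_lt (pow_pos hlam0 _)
      have hpow1 : lam ^ (k + 1) ≤ 1 := pow_le_one₀ (le_of_lt hlam0) hlam1
      refine ⟨hX.1.smul_mem_of_zero_mem (interior_subset hX.2.2) hxX
        ⟨hpow0, hpow1⟩, lam ^ (k + 1) • u,
        hU.1.smul_mem_of_zero_mem (interior_subset hU.2.2) huU ⟨hpow0, hpow1⟩, ?_⟩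
      rw [one_smul] at hAxBu
      have key : WithLp.toLp 2 (A.mulVec (WithLp.ofLp (lam ^ (k + 1) • x)) + B.mulVec (WithLp.ofLp (lam ^ (k + 1) • u)))
          = lam ^ (k + 1) • WithLp.toLp 2 (A.mulVec x + B.mulVec u) := by
        rw [WithLp.ofLp_smul, WithLp.ofLp_smul, Matrix.mulVec_smul, Matrix.mulVec_smul, ← smul_add,
          WithLp.toLp_smul]
      rw [key, pow_succ', mul_smul]
      exact Set.smul_mem_smul_set (ih (Set.smul_mem_smul_set hAxBu))
end

section
/- Let μ ∈ (0,1) and λ* ∈ (0,1), let (A,B) be controllable, let X ⊆ ℝⁿ and U ⊆ ℝᵐ be C-sets, let C be a λ*-contractive C-set, and set ε := (1−μ)/(2μ). Assume λ ∈ [λ*, 1) and k ∈ ℕ are such that Q_k^λ(X) ⊆ (1+ε)·Q_k^λ(C) ⊆ (1+ε)·C_max^λ and 1 + μ ≤ 2λ^k. Then μ·C_max^1 ⊆ Q_k^λ(C) ⊆ C_max^λ, where C_max^1 is the maximal controlled invariant set. -/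
open Set Metric Pointwise

lemma contractive_Qiter {n m : ℕ} {A : Matrix (Fin n) (Fin n) ℝ} {B : Matrix (Fin n) (Fin m) ℝ}
    {X : Set (Euc n)} {U : Set (Euc m)} {lam : ℝ} {D : Set (Euc n)}
    (hD : IsContractive A B X U lam D) (k : ℕ) :
    IsContractive A B X U lam (Qiter A B X U lam D k) := by
  induction k with
  | zero => exact hD
  | succ k ih => exact contractive_Q1 ih

lemma mem_Qiter_of_inv {n m : ℕ} {A : Matrix (Fin n) (Fin n) ℝ} {B : Matrix (Fin n) (Fin m) ℝ}
    {X : Set (Euc n)} {U : Set (Euc m)} {lam : ℝ} (hlam0 : 0 < lam) (hlam1 : lam < 1)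
    (hXc : Convex ℝ X) (hX0 : (0 : Euc n) ∈ X) (hUc : Convex ℝ U) (hU0 : (0 : Euc m) ∈ U)
    {S : Set (Euc n)} (hS : IsContractive A B X U 1 S) :
    ∀ k : ℕ, ∀ c : ℝ, 0 ≤ c → c ≤ lam ^ k → ∀ x ∈ S,
      c • x ∈ Qiter A B X U lam X k := by
  intro k
  induction k with
  | zero =>
    intro c hc0 hc1 x hx
    exact hXc.smul_mem_of_zero_mem hX0 (hS.1 hx) ⟨hc0, by simpa using hc1⟩
  | succ k ih =>
    intro c hc0 hck x hx
    have hc1 : c ≤ 1 := hck.trans (pow_le_one₀ hlam0.le hlam1.le)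
    obtain ⟨u, hu, hmem⟩ := hS.2 x hx
    rw [one_smul] at hmem
    refine ⟨hXc.smul_mem_of_zero_mem hX0 (hS.1 hx) ⟨hc0, hc1⟩, c • u,
      hUc.smul_mem_of_zero_mem hU0 hu ⟨hc0, hc1⟩, ?_⟩
    have heq : WithLp.toLp 2 (A.mulVec (c • x).ofLp + B.mulVec (c • u).ofLp)
        = lam • ((c / lam) • WithLp.toLp 2 (A.mulVec x + B.mulVec u)) := by
      rw [smul_smul, mul_div_cancel₀ _ hlam0.ne']
      ext i
      simp [Matrix.mulVec_smul, mul_add]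
    rw [heq]
    refine Set.smul_mem_smul_set (ih (c / lam) (div_nonneg hc0 hlam0.le) ?_ _ hmem)
    rw [div_le_iff₀ hlam0]
    calc c ≤ lam ^ (k + 1) := hck
    _ = lam ^ k * lam := pow_succ lam k

theorem stmt16 {n m : ℕ} (μ lamStar : ℝ)
    (hμ : μ ∈ Set.Ioo (0 : ℝ) 1) (hlamStar : lamStar ∈ Set.Ioo (0 : ℝ) 1)
    (A : Matrix (Fin n) (Fin n) ℝ) (B : Matrix (Fin n) (Fin m) ℝ)
    (hAB : Controllable A B)
    (X : Set (Euc n)) (U : Set (Euc m)) (hX : IsCSet X) (hU : IsCSet U)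
    (C : Set (Euc n)) (hC : IsCSet C) (hCcontr : IsContractive A B X U lamStar C)
    (lam : ℝ) (hlam : lam ∈ Set.Ico lamStar 1) (k : ℕ)
    (h1 : Qiter A B X U lam X k ⊆ (1 + (1 - μ) / (2 * μ)) • Qiter A B X U lam C k)
    (h2 : (1 + (1 - μ) / (2 * μ)) • Qiter A B X U lam C k
        ⊆ (1 + (1 - μ) / (2 * μ)) • Cmax A B X U lam)
    (h3 : 1 + μ ≤ 2 * lam ^ k) :
    μ • Cmax A B X U 1 ⊆ Qiter A B X U lam C k ∧
      Qiter A B X U lam C k ⊆ Cmax A B X U lam := by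
  obtain ⟨hμ0, hμ1⟩ := hμ
  obtain ⟨hls0, hls1⟩ := hlamStar
  obtain ⟨hlams, hlam1⟩ := hlam
  have hlam0 : 0 < lam := hls0.trans_le hlams
  -- C is lam-contractive
  have hCl : IsContractive A B X U lam C := by
    refine ⟨hCcontr.1, fun x hx => ?_⟩
    obtain ⟨u, hu, hmem⟩ := hCcontr.2 x hx
    refine ⟨u, hu, ?_⟩
    obtain ⟨y, hy, hyeq⟩ := hmem
    have hy' : (lamStar / lam) • y ∈ C :=
      hC.1.smul_mem_of_zero_mem (interior_subset hC.2.2) hy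
        ⟨div_nonneg hls0.le hlam0.le, (div_le_one hlam0).2 hlams⟩
    refine ⟨(lamStar / lam) • y, hy', ?_⟩
    show lam • (lamStar / lam) • y = WithLp.toLp 2 (A.mulVec x + B.mulVec u)
    rw [smul_smul, mul_div_cancel₀ _ hlam0.ne']
    exact hyeq
  have hQcontr := contractive_Qiter hCl k
  refine ⟨?_, Set.subset_sUnion_of_mem hQcontr⟩
  -- first inclusion
  set t : ℝ := 1 + (1 - μ) / (2 * μ) with ht
  have htpos : 0 < t := by
    have h0 : 0 ≤ (1 - μ) / (2 * μ) := div_nonneg (by linarith) (by linarith)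
    simp only [ht]
    linarith
  have hμt : μ * t = (1 + μ) / 2 := by
    rw [ht]
    field_simp
    ring
  rintro z ⟨x, hx, rfl⟩
  obtain ⟨S, hS, hxS⟩ := hx
  have hXc := hX.1
  have hX0 : (0 : Euc n) ∈ X := interior_subset hX.2.2
  have hck : μ * t ≤ lam ^ k := by rw [hμt]; linarith
  have hmem : (μ * t) • x ∈ Qiter A B X U lam X k :=
    mem_Qiter_of_inv hlam0 hlam1 hXc hX0 hU.1 (interior_subset hU.2.2) hS k (μ * t)
      (by positivity) hck x hxS
  obtain ⟨y, hy, hyeq⟩ := h1 hmem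
  have : μ • x = y := by
    have := congrArg (fun v => t⁻¹ • v) hyeq
    simpa [smul_smul, inv_mul_cancel₀ htpos.ne', mul_comm t⁻¹ (μ * t),
      mul_assoc, mul_inv_cancel₀ htpos.ne'] using this.symm
  show μ • x ∈ Qiter A B X U lam C k
  rw [this]
  exact hy
end
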